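/- For λ₀, λ₁ ∈ ℕ₀ⁿ with λ₀ ≠ λ₁, the polynomial X^{λ₀} − X^{λ₁} is irreducible in ℤ[X₁,…,Xₙ] if and only if λ₀·λ₁ = 0 and λ₀ − λ₁ has coprime coefficients. -/

import Mathlib

open scoped BigOperators

namespace WordEquations

/-- The set of letters occurring in the images of a (letter-image) morphism. -/
def alph {Ξ Δ : Type*} (h : Ξ → List Δ) : Set Δ := ⋃ x, {a | a ∈ h x}

/-- `h` is a solution of the system `T` of word equations. -/
def IsSolution {Ξ A : Type*} (h : Ξ → List A) (T : Set (List Ξ × List Ξ)) : Prop :=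
  ∀ e ∈ T, e.1.flatMap h = e.2.flatMap h

/-- `h` is a solution of the single word equation `E`. -/
def IsSolutionE {Ξ A : Type*} (h : Ξ → List A) (E : List Ξ × List Ξ) : Prop :=
  E.1.flatMap h = E.2.flatMap h

/-- `θ` is a renaming of letters on the set `S`: it maps each letter of `S` to a
single letter, injectively on `S`. -/
def IsRenamingOn {A B : Type*} (θ : A → List B) (S : Set A) : Prop :=
  (∀ a ∈ S, ∃ b, θ a = [b]) ∧ ∀ a₁ ∈ S, ∀ a₂ ∈ S, θ a₁ = θ a₂ → a₁ = a₂

/-- `g` is a principal solution of `T`: whenever `g = θ ∘ g'` for a solution `g'`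
(and a morphism `θ` non-erasing on `alph g'`), `θ` is a renaming of letters. -/
def IsPrincipalSolution {Ξ Δ : Type*} (g : Ξ → List Δ) (T : Set (List Ξ × List Ξ)) : Prop :=
  IsSolution g T ∧
  ∀ (Δ' : Type) (g' : Ξ → List Δ') (θ : Δ' → List Δ),
    IsSolution g' T → (∀ a ∈ alph g', θ a ≠ []) →
    (∀ x, g x = (g' x).flatMap θ) → IsRenamingOn θ (alph g')

/-- The vector `γ(h)_a = (|h(x₁)|_a, …, |h(xₙ)|_a) ∈ ℚⁿ`. -/
def gamVec {n : ℕ} {Δ : Type*} [DecidableEq Δ] (h : Fin n → List Δ) (a : Δ) :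
    Fin n → ℚ := fun j => ((h j).count a : ℚ)

/-- `Γ_h`, the ℚ-span of the vectors `γ(h)_a`. -/
noncomputable def GammaSpace {n : ℕ} {Δ : Type*} [DecidableEq Δ] (h : Fin n → List Δ) :
    Submodule ℚ (Fin n → ℚ) := Submodule.span ℚ (Set.range (gamVec h))

/-- The rank of a morphism: `dim Γ_h`. -/
noncomputable def morphRank {n : ℕ} {Δ : Type*} [DecidableEq Δ] (h : Fin n → List Δ) : ℕ :=
  Module.finrank ℚ ↥(GammaSpace h)

/-- `Mℕ`: all finite nonempty sums `Σᵢ aᵢ αᵢ` with `aᵢ` positive integers and `αᵢ ∈ M`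
(equivalently, nonempty finite sums of elements of `M` with repetitions). -/
def natSums {n : ℕ} (M : Set (Fin n → ℚ)) : Set (Fin n → ℚ) :=
  {v | ∃ l : List (Fin n → ℚ), l ≠ [] ∧ (∀ x ∈ l, x ∈ M) ∧ l.sum = v}

/-- `M ⊆ ℚⁿ` has rank `r`: the ℚ-span of `M` has dimension `r`, and `M` is not contained
in any finite union of `(r-1)`-dimensional subspaces of its span. -/
def HasRank {n : ℕ} (M : Set (Fin n → ℚ)) (r : ℕ) : Prop :=
  Module.finrank ℚ ↥(Submodule.span ℚ M) = r ∧
  ∀ V : Finset (Submodule ℚ (Fin n → ℚ)),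
    (∀ W ∈ V, W ≤ Submodule.span ℚ M ∧ Module.finrank ℚ ↥W + 1 = r) →
    ¬ M ⊆ ⋃ W ∈ V, (W : Set (Fin n → ℚ))

/-- The monomial `X^α = ∏ᵢ Xᵢ^{αᵢ}` in `ℤ[X₁,…,Xₙ]`. -/
noncomputable def Xpow {n : ℕ} (α : Fin n → ℕ) : MvPolynomial (Fin n) ℤ :=
  ∏ i, MvPolynomial.X i ^ α i

/-- The polynomial `Σ_{a : w_a = j} ∏_{t<a} X_{w_t}` associated with one side of an equation. -/
noncomputable def sideS {n : ℕ} (w : List (Fin n)) (j : Fin n) : MvPolynomial (Fin n) ℤ :=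
  ∑ a : Fin w.length, if w.get a = j then ((w.take (a : ℕ)).map MvPolynomial.X).prod else 0

/-- The polynomial `S_{E,x_j}` of the equation `E = (u,v)`. -/
noncomputable def SE {n : ℕ} (E : List (Fin n) × List (Fin n)) (j : Fin n) :
    MvPolynomial (Fin n) ℤ :=
  sideS E.1 j - sideS E.2 j

/-- Evaluation `p ↦ p(β)`, induced by `Xᵢ ↦ x^{βᵢ}`. -/
noncomputable def evalAt {n : ℕ} (β : Fin n → ℕ) (p : MvPolynomial (Fin n) ℤ) : Polynomial ℤ :=
  MvPolynomial.eval₂ (Int.castRingHom (Polynomial ℤ)) (fun i => Polynomial.X ^ β i) p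

/-- `λ⁺`, the positive part of an integer vector. -/
def lamPos {n : ℕ} (lam : Fin n → ℤ) : Fin n → ℕ := fun i => (lam i).toNat

/-- `λ⁻`, the negative part of an integer vector. -/
def lamNeg {n : ℕ} (lam : Fin n → ℤ) : Fin n → ℕ := fun i => (-(lam i)).toNat

/-- The length type `L(θ_α ∘ h)` of the composition of `h` with the power morphism
`θ_α : aᵢ ↦ aᵢ^{αᵢ}`. -/
def powLenType {n k : ℕ} (α : Fin k → ℕ) (h : Fin n → List (Fin k)) : Fin n → ℕ :=
  fun x => ∑ a, α a * (h x).count a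

/-- The field `ℚ(x)`, realized as the field of fractions of `ℤ[x]`. -/
noncomputable abbrev RatX : Type := FractionRing (Polynomial ℤ)

/-- The vector `𝒮_E(β) ∈ ℚ(x)ⁿ`. -/
noncomputable def SEvec {n : ℕ} (E : List (Fin n) × List (Fin n)) (β : Fin n → ℕ) :
    Fin n → RatX :=
  fun j => algebraMap (Polynomial ℤ) RatX (evalAt β (SE E j))

/-- The set of exponents of the minimal monomials of `p` (exponents in the support of `p`
that are minimal with respect to the componentwise order). -/
noncomputable def minimalSupport {n : ℕ} (p : MvPolynomial (Fin n) ℤ) : Finset (Fin n →₀ ℕ) :=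
  p.support.filter (fun β => ∀ β' ∈ p.support, β' ≤ β → β' = β)


section Aux

open MvPolynomial

variable {n : ℕ}

private lemma Xpow_eq_monomial (l : Fin n → ℕ) :
    Xpow l = monomial (Finsupp.equivFunOnFinite.symm l) 1 := by
  rw [← prod_X_pow_eq_monomial, Xpow,
    Finset.prod_subset (Finset.subset_univ (Finsupp.equivFunOnFinite.symm l).support)
    (fun i _ hi => by rw [Finsupp.notMem_support_iff.mp hi, pow_zero])]
  exact Finset.prod_congr rfl fun i _ => by rfl

private lemma eval_ones_Xpow (l : Fin n → ℕ) :
    MvPolynomial.eval (fun _ => (1:ℤ)) (Xpow l) = 1 := by simp [Xpow]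

private lemma not_isUnit_Xpow_sub (a b : Fin n → ℕ) : ¬ IsUnit (Xpow a - Xpow b) := by
  intro h
  have := h.map (MvPolynomial.eval (fun _ => (1:ℤ)))
  rw [map_sub, eval_ones_Xpow, eval_ones_Xpow, sub_self] at this
  exact not_isUnit_zero this

private lemma Xpow_pow (a : Fin n → ℕ) (m : ℕ) : Xpow (fun i => m * a i) = Xpow a ^ m := by
  rw [Xpow, Xpow, ← Finset.prod_pow]
  exact Finset.prod_congr rfl fun i _ => by rw [mul_comm, pow_mul]

private lemma exists_bezout (lam : Fin n → ℤ) (h : Finset.univ.gcd lam = 1) :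
    ∃ cf : Fin n → ℤ, ∑ i, cf i * lam i = 1 := by
  have h1 : (1 : ℤ) ∈ Ideal.span (Set.range lam) := by
    obtain ⟨d, hd⟩ := (IsPrincipalIdealRing.principal (Ideal.span (Set.range lam)))
    have hdvd : ∀ i, d ∣ lam i := fun i => by
      have : lam i ∈ Ideal.span (Set.range lam) := Ideal.subset_span ⟨i, rfl⟩
      rw [hd] at this
      exact Ideal.mem_span_singleton.mp this
    have hd1 : d ∣ 1 := h ▸ Finset.dvd_gcd (fun i _ => hdvd i)
    rw [hd]
    exact Ideal.mem_span_singleton.mpr hd1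
  rw [Ideal.mem_span_range_iff_exists_fun] at h1
  obtain ⟨c, hc⟩ := h1
  exact ⟨c, by simpa [smul_eq_mul] using hc⟩

private lemma prime_Xpow_sub (l₀ l₁ : Fin n → ℕ) (hne : l₀ ≠ l₁)
    (h01 : ∀ i, l₀ i = 0 ∨ l₁ i = 0)
    (hg : Finset.univ.gcd (fun i => (l₀ i : ℤ) - (l₁ i : ℤ)) = 1) :
    Prime (Xpow l₀ - Xpow l₁ : MvPolynomial (Fin n) ℤ) := by
  classical
  obtain ⟨cf, hcf⟩ := exists_bezout _ hg
  set lam : Fin n → ℤ := fun i => (l₀ i : ℤ) - l₁ i with hlam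
  set p : MvPolynomial (Fin n) ℤ := Xpow l₀ - Xpow l₁ with hp
  -- the classifying additive map
  set cmap : (Fin n →₀ ℕ) →+ (Fin n → ℤ) := AddMonoidHom.mk'
      (fun d => (fun i => ((d i : ℕ) : ℤ)) - (∑ i, cf i * d i) • lam)
      (by
        intro a b
        funext i
        simp only [Pi.sub_apply, Pi.add_apply, Pi.smul_apply, smul_eq_mul,
          Finsupp.coe_add, Pi.add_apply]
        push_cast
        rw [show (∑ j, cf j * ((a j : ℤ) + (b j : ℤ)))
              = (∑ j, cf j * (a j : ℤ)) + ∑ j, cf j * (b j : ℤ) by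
            rw [← Finset.sum_add_distrib]; exact Finset.sum_congr rfl fun j _ => by ring]
        ring) with hcmap
  have hcmap_apply : ∀ (d : Fin n →₀ ℕ) (i : Fin n),
      cmap d i = (d i : ℤ) - (∑ j, cf j * d j) * lam i := fun d i => rfl
  -- key congruence, nonneg case
  have key' : ∀ (α β : Fin n →₀ ℕ) (k : ℕ), (∀ i, (α i : ℤ) = (β i : ℤ) + k * lam i) →
      p ∣ (monomial α 1 - monomial β 1 : MvPolynomial (Fin n) ℤ) := by
    intro α β k hk
    set γ : Fin n →₀ ℕ := Finsupp.equivFunOnFinite.symm (fun i => β i - k * l₁ i) with hγ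
    have hγa : ∀ i, γ i = β i - k * l₁ i := fun i => by
      simp [hγ, Finsupp.equivFunOnFinite]
    have harith : ∀ i, α i = (β i - k * l₁ i) + k * l₀ i ∧ β i = (β i - k * l₁ i) + k * l₁ i := by
      intro i
      have h1 := hk i
      simp only [hlam] at h1
      rw [mul_sub] at h1
      have hm0 : ((k * l₀ i : ℕ) : ℤ) = (k : ℤ) * (l₀ i : ℤ) := by push_cast [Nat.cast_mul]; ring
      have hm1 : ((k * l₁ i : ℕ) : ℤ) = (k : ℤ) * (l₁ i : ℤ) := by push_cast [Nat.cast_mul]; ring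
      rcases h01 i with h2 | h2 <;> rw [h2] at h1 ⊢ <;> constructor <;> omega
    have hα : α = γ + k • (Finsupp.equivFunOnFinite.symm l₀) := by
      ext i
      simp only [Finsupp.coe_add, Pi.add_apply, Finsupp.coe_smul, Pi.smul_apply, smul_eq_mul]
      have h4 : (Finsupp.equivFunOnFinite.symm l₀) i = l₀ i := by
        simp [Finsupp.equivFunOnFinite]
      rw [h4, hγa i]
      exact (harith i).1
    have hβ : β = γ + k • (Finsupp.equivFunOnFinite.symm l₁) := by
      ext i
      simp only [Finsupp.coe_add, Pi.add_apply, Finsupp.coe_smul, Pi.smul_apply, smul_eq_mul]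
      have h4 : (Finsupp.equivFunOnFinite.symm l₁) i = l₁ i := by
        simp [Finsupp.equivFunOnFinite]
      rw [h4, hγa i]
      exact (harith i).2
    have hmon : ∀ δ : Fin n →₀ ℕ,
        (monomial (γ + k • δ) (1:ℤ) : MvPolynomial (Fin n) ℤ)
          = monomial γ 1 * monomial δ 1 ^ k := by
      intro δ
      rw [monomial_pow, monomial_mul, one_pow, mul_one]
    rw [hα, hβ, hmon, hmon, ← mul_sub, hp, Xpow_eq_monomial, Xpow_eq_monomial]
    exact Dvd.dvd.mul_left (sub_dvd_pow_sub_pow _ _ k) _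
  -- key congruence
  have key : ∀ (α β : Fin n →₀ ℕ), cmap α = cmap β →
      p ∣ (monomial α 1 - monomial β 1 : MvPolynomial (Fin n) ℤ) := by
    intro α β h
    set k : ℤ := (∑ j, cf j * α j) - (∑ j, cf j * β j) with hkdef
    have hki : ∀ i, (α i : ℤ) = (β i : ℤ) + k * lam i := by
      intro i
      have := congrFun h i
      rw [hcmap_apply, hcmap_apply] at this
      rw [hkdef]
      linarith
    rcases le_or_gt 0 k with hk0 | hk0
    · refine key' α β k.toNat (fun i => ?_)
      rw [Int.toNat_of_nonneg hk0]
      exact hki i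
    · have := key' β α (-k).toNat (fun i => by
        rw [Int.toNat_of_nonneg (by omega)]
        have := hki i
        linarith)
      rw [show (monomial α 1 - monomial β 1 : MvPolynomial (Fin n) ℤ)
            = -(monomial β 1 - monomial α 1) by ring]
      exact dvd_neg.mpr this
  -- the ring hom
  set Θ : MvPolynomial (Fin n) ℤ →+* AddMonoidAlgebra ℤ (Fin n → ℤ) :=
    AddMonoidAlgebra.mapDomainRingHom ℤ cmap with hΘ
  have hΘmono : ∀ (d : Fin n →₀ ℕ) (a : ℤ), Θ (monomial d a) = AddMonoidAlgebra.single (cmap d) a := by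
    intro d a
    rw [← MvPolynomial.single_eq_monomial]
    exact AddMonoidAlgebra.mapDomain_single
  have hΘcoeff : ∀ (q : MvPolynomial (Fin n) ℤ) (v : Fin n → ℤ),
      (Θ q).coeff v = ∑ d ∈ q.support.filter (fun d => cmap d = v), q.coeff d := by
    intro q v
    show Finsupp.mapDomain cmap (AddMonoidAlgebra.coeff q) v = _
    rw [Finsupp.mapDomain, Finsupp.sum_apply, Finsupp.sum, Finset.sum_filter]
    refine Finset.sum_congr rfl fun d _ => ?_
    rw [Finsupp.single_apply]
    split <;> simp [*, MvPolynomial.coeff]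
  -- Θ kills p
  have hcmapL : cmap (Finsupp.equivFunOnFinite.symm l₀) = cmap (Finsupp.equivFunOnFinite.symm l₁) := by
    funext i
    rw [hcmap_apply, hcmap_apply]
    have h4 : ∀ (l : Fin n → ℕ) (j : Fin n), (Finsupp.equivFunOnFinite.symm l) j = l j :=
      fun l j => by simp [Finsupp.equivFunOnFinite]
    simp only [h4]
    have hks : (∑ j, cf j * (l₀ j : ℤ)) - (∑ j, cf j * (l₁ j : ℤ)) = 1 := by
      rw [← Finset.sum_sub_distrib]
      rw [← hcf]
      exact Finset.sum_congr rfl fun j _ => by ring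
    simp only [hlam]
    linear_combination ((l₁ i : ℤ) - (l₀ i : ℤ)) * hks
  have hΘp : Θ p = 0 := by
    rw [hp, map_sub, Xpow_eq_monomial, Xpow_eq_monomial, hΘmono, hΘmono, hcmapL, sub_self]
  -- kernel is contained in the span
  have hker2 : ∀ q : MvPolynomial (Fin n) ℤ, Θ q = 0 → q ∈ Ideal.span {p} := by
    intro q hq
    set I := Ideal.span {p} with hI
    have hmono : ∀ α β : Fin n →₀ ℕ, cmap α = cmap β →
        Ideal.Quotient.mk I (monomial α 1) = Ideal.Quotient.mk I (monomial β 1) := by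
      intro α β h
      rw [Ideal.Quotient.eq]
      exact Ideal.mem_span_singleton.mpr (key α β h)
    rw [← Ideal.Quotient.eq_zero_iff_mem]
    conv_lhs => rw [← MvPolynomial.support_sum_monomial_coeff q]
    rw [map_sum, ← Finset.sum_fiberwise_of_maps_to
      (g := fun d => cmap d) (t := q.support.image (fun d => cmap d))
      (fun d hd => Finset.mem_image_of_mem _ hd)]
    refine Finset.sum_eq_zero fun v hv => ?_
    obtain ⟨β, hβs, hβ⟩ := Finset.mem_image.mp hv
    have heach : ∀ d ∈ q.support.filter (fun d => cmap d = v),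
        Ideal.Quotient.mk I (monomial d (q.coeff d))
          = Ideal.Quotient.mk I (C (q.coeff d)) * Ideal.Quotient.mk I (monomial β 1) := by
      intro d hd
      rw [← map_mul]
      rw [Ideal.Quotient.eq]
      have hdv : p ∣ (monomial d 1 - monomial β 1 : MvPolynomial (Fin n) ℤ) :=
        key d β (by rw [(Finset.mem_filter.mp hd).2, hβ])
      have : (monomial d (q.coeff d) - C (q.coeff d) * monomial β 1 : MvPolynomial (Fin n) ℤ)
          = C (q.coeff d) * (monomial d 1 - monomial β 1) := by
        simp only [mul_sub, C_mul_monomial, mul_one]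
      rw [hI, this]
      exact Ideal.mem_span_singleton.mpr (hdv.mul_left _)
    rw [Finset.sum_congr rfl heach, ← Finset.sum_mul, ← map_sum, ← map_sum]
    have hzero : (∑ d ∈ q.support.filter (fun d => cmap d = v), q.coeff d) = 0 := by
      rw [← hΘcoeff q v, hq]
      rfl
    rw [hzero, map_zero, map_zero, zero_mul]
  -- p is nonzero
  have hp0 : p ≠ 0 := by
    intro h
    apply hne
    have hL : (Finsupp.equivFunOnFinite.symm l₀ : Fin n →₀ ℕ) = Finsupp.equivFunOnFinite.symm l₁ := by
      by_contra hLne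
      have := congrArg (MvPolynomial.coeff (Finsupp.equivFunOnFinite.symm l₀)) h
      rw [hp] at this
      rw [Xpow_eq_monomial, Xpow_eq_monomial] at this
      simp [MvPolynomial.coeff_monomial, Ne.symm hLne] at this
    exact Finsupp.equivFunOnFinite.symm.injective hL
  -- conclude
  haveI : IsDomain (AddMonoidAlgebra ℤ (Fin n → ℤ)) := NoZeroDivisors.to_isDomain _
  have hkprime : (RingHom.ker Θ).IsPrime := RingHom.ker_isPrime Θ
  have hkereq : RingHom.ker Θ = Ideal.span {p} := by
    refine le_antisymm (fun q hq => hker2 q hq) ?_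
    rw [Ideal.span_le, Set.singleton_subset_iff]
    exact hΘp
  exact (Ideal.span_singleton_prime hp0).mp (hkereq ▸ hkprime)

end Aux

/-- for `λ₀ ≠ λ₁` in `ℕ₀ⁿ`, the polynomial `X^{λ₀} - X^{λ₁}` is
irreducible iff `λ₀·λ₁ = 0` and `λ₀ - λ₁` has coprime coefficients. -/
theorem Xpow_sub_irreducible_iff {n : ℕ} (l₀ l₁ : Fin n → ℕ) (hne : l₀ ≠ l₁) :
    Irreducible (Xpow l₀ - Xpow l₁) ↔
      (∑ i, l₀ i * l₁ i = 0 ∧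
        Finset.univ.gcd (fun i => (l₀ i : ℤ) - (l₁ i : ℤ)) = 1) := by
  classical
  constructor
  · intro hp
    have h1 : ∑ i, l₀ i * l₁ i = 0 := by
      by_contra hsum
      obtain ⟨i, hi0, hi1⟩ : ∃ i, l₀ i ≠ 0 ∧ l₁ i ≠ 0 := by
        by_contra hno
        push_neg at hno
        exact hsum (Finset.sum_eq_zero fun i _ => by
          by_cases h : l₀ i = 0
          · rw [h, zero_mul]
          · rw [hno i h, mul_zero])
      have hfac : ∀ l : Fin n → ℕ, l i ≠ 0 →
          Xpow l = MvPolynomial.X i * Xpow (Function.update l i (l i - 1)) := by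
        intro l hl
        have hexp : Finsupp.equivFunOnFinite.symm l = Finsupp.single i 1
            + Finsupp.equivFunOnFinite.symm (Function.update l i (l i - 1)) := by
          ext j
          simp only [Finsupp.coe_add, Pi.add_apply, Finsupp.single_apply]
          have hj : (Finsupp.equivFunOnFinite.symm l) j = l j := by
            simp [Finsupp.equivFunOnFinite]
          have hj' : (Finsupp.equivFunOnFinite.symm (Function.update l i (l i - 1))) j
              = Function.update l i (l i - 1) j := by
            simp [Finsupp.equivFunOnFinite]
          rw [hj, hj']
          by_cases h : j = i
          · subst h
            rw [Function.update_self, if_pos rfl]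
            omega
          · rw [Function.update_of_ne h, if_neg (Ne.symm h), zero_add]
        rw [Xpow_eq_monomial, Xpow_eq_monomial, hexp, MvPolynomial.X,
          MvPolynomial.monomial_mul, one_mul]
      have hfac2 : Xpow l₀ - Xpow l₁ = MvPolynomial.X i *
          (Xpow (Function.update l₀ i (l₀ i - 1)) - Xpow (Function.update l₁ i (l₁ i - 1))) := by
        rw [mul_sub, ← hfac l₀ hi0, ← hfac l₁ hi1]
      rcases hp.isUnit_or_isUnit hfac2 with hu | hu
      · have := hu.map (MvPolynomial.eval (fun _ => (0:ℤ)))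
        rw [MvPolynomial.eval_X] at this
        exact not_isUnit_zero this
      · exact not_isUnit_Xpow_sub _ _ hu
    refine ⟨h1, ?_⟩
    have h01 : ∀ i, l₀ i = 0 ∨ l₁ i = 0 := by
      intro i
      have := (Finset.sum_eq_zero_iff.mp h1) i (Finset.mem_univ i)
      exact Nat.mul_eq_zero.mp this
    by_contra hg
    set dif : Fin n → ℤ := fun i => (l₀ i : ℤ) - l₁ i with hdif
    have hd0 : Finset.univ.gcd dif ≠ 0 := by
      intro h0
      apply hne
      funext i
      have h' : (l₀ i : ℤ) - l₁ i = 0 := Finset.gcd_eq_zero_iff.mp h0 i (Finset.mem_univ i)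
      omega
    have hdnn : 0 ≤ Finset.univ.gcd dif :=
      Int.nonneg_of_normalize_eq_self Finset.normalize_gcd
    set m : ℕ := (Finset.univ.gcd dif).toNat with hm
    have hmz : (m : ℤ) = Finset.univ.gcd dif := Int.toNat_of_nonneg hdnn
    have hm2 : 2 ≤ m := by
      have : Finset.univ.gcd dif ≠ 1 := hg
      omega
    have hdvd : ∀ i, (m : ℤ) ∣ dif i := fun i => by
      rw [hmz]; exact Finset.gcd_dvd (Finset.mem_univ i)
    have hdvd0 : ∀ i, m ∣ l₀ i := by
      intro i
      rcases h01 i with h | h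
      · rw [h]; exact Dvd.intro 0 rfl
      · have := hdvd i
        rw [hdif] at this
        simp only [h, Nat.cast_zero, sub_zero] at this
        exact_mod_cast this
    have hdvd1 : ∀ i, m ∣ l₁ i := by
      intro i
      rcases h01 i with h | h
      · have := hdvd i
        rw [hdif] at this
        simp only [h, Nat.cast_zero, zero_sub, dvd_neg] at this
        exact_mod_cast this
      · rw [h]; exact Dvd.intro 0 rfl
    set a : Fin n → ℕ := fun i => l₀ i / m with ha
    set b : Fin n → ℕ := fun i => l₁ i / m with hb
    have hXa : Xpow l₀ = Xpow a ^ m := by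
      rw [← Xpow_pow]
      congr 1
      funext i
      rw [ha]
      exact (Nat.mul_div_cancel' (hdvd0 i)).symm
    have hXb : Xpow l₁ = Xpow b ^ m := by
      rw [← Xpow_pow]
      congr 1
      funext i
      rw [hb]
      exact (Nat.mul_div_cancel' (hdvd1 i)).symm
    have hfac : Xpow l₀ - Xpow l₁ =
        (∑ j ∈ Finset.range m, Xpow a ^ j * Xpow b ^ (m - 1 - j)) * (Xpow a - Xpow b) := by
      rw [geom_sum₂_mul, hXa, hXb]
    rcases hp.isUnit_or_isUnit hfac with hu | hu
    · have := hu.map (MvPolynomial.eval (fun _ => (1:ℤ)))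
      rw [map_sum] at this
      have heq : ∀ j ∈ Finset.range m,
          MvPolynomial.eval (fun _ => (1:ℤ)) (Xpow a ^ j * Xpow b ^ (m - 1 - j)) = 1 := by
        intro j _
        rw [map_mul, map_pow, map_pow, eval_ones_Xpow, eval_ones_Xpow, one_pow, one_pow, one_mul]
      rw [Finset.sum_congr rfl heq, Finset.sum_const, Finset.card_range, nsmul_eq_mul,
        mul_one] at this
      rw [Int.isUnit_iff] at this
      omega
    · exact not_isUnit_Xpow_sub _ _ hu
  · rintro ⟨h1, h2⟩
    have h01 : ∀ i, l₀ i = 0 ∨ l₁ i = 0 := fun i =>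
      Nat.mul_eq_zero.mp ((Finset.sum_eq_zero_iff.mp h1) i (Finset.mem_univ i))
    exact (prime_Xpow_sub l₀ l₁ hne h01 h2).irreducible





end WordEquations
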